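/- Let γ : (0,∞) → ℝ³ be the logarithmic spiral γ(s) = (s/√2)·(cos(log s), 0, sin(log s)), with unit tangent T(s) = γ'(s) and unit principal normal N(s) = γ''(s)/‖γ''(s)‖. Then ⟨γ(s)/‖γ(s)‖, T(s)⟩ = 1/√2 and ⟨γ(s)/‖γ(s)‖, N(s)⟩ = -1/√2 for all s > 0. -/

import Mathlib

noncomputable def e3 (x y z : ℝ) : EuclideanSpace ℝ (Fin 3) :=
  (WithLp.equiv 2 (Fin 3 → ℝ)).symm ![x, y, z]

lemma inner_e3 (x y z x' y' z' : ℝ) :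
    (inner ℝ (e3 x y z) (e3 x' y' z') : ℝ) = x * x' + y * y' + z * z' := by
  simp [e3, PiLp.inner_apply, Fin.sum_univ_three, RCLike.inner_apply]
  ring

lemma norm_e3 (x y z : ℝ) : ‖e3 x y z‖ = Real.sqrt (x ^ 2 + y ^ 2 + z ^ 2) := by
  rw [EuclideanSpace.norm_eq]
  simp [e3, Fin.sum_univ_three, Real.norm_eq_abs, sq_abs]

lemma hasDerivAt_e3 {f g h : ℝ → ℝ} {f' g' h' s : ℝ}
    (hf : HasDerivAt f f' s) (hg : HasDerivAt g g' s) (hh : HasDerivAt h h' s) :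
    HasDerivAt (fun t => e3 (f t) (g t) (h t)) (e3 f' g' h') s := by
  have H : HasDerivAt (fun t => (![f t, g t, h t] : Fin 3 → ℝ)) ![f', g', h'] s := by
    rw [hasDerivAt_pi]
    intro i
    fin_cases i <;> simpa
  exact ((PiLp.continuousLinearEquiv 2 ℝ (fun _ : Fin 3 => ℝ)).symm.hasFDerivAt).comp_hasDerivAt s H

lemma hasDerivAt_a (s : ℝ) (hs : 0 < s) :
    HasDerivAt (fun t => t / Real.sqrt 2 * Real.cos (Real.log t))
      ((Real.cos (Real.log s) - Real.sin (Real.log s)) / Real.sqrt 2) s := by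
  have h2 : Real.sqrt 2 ≠ 0 := by positivity
  have hl := Real.hasDerivAt_log hs.ne'
  have hc := (Real.hasDerivAt_cos (Real.log s)).comp s hl
  have := ((hasDerivAt_id s).div_const (Real.sqrt 2)).mul hc
  refine this.congr_deriv ?_
  have hs0 : s ≠ 0 := hs.ne'
  field_simp
  simp only [Function.comp_apply, id]
  ring

lemma hasDerivAt_b (s : ℝ) (hs : 0 < s) :
    HasDerivAt (fun t => t / Real.sqrt 2 * Real.sin (Real.log t))
      ((Real.sin (Real.log s) + Real.cos (Real.log s)) / Real.sqrt 2) s := by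
  have h2 : Real.sqrt 2 ≠ 0 := by positivity
  have hl := Real.hasDerivAt_log hs.ne'
  have hc := (Real.hasDerivAt_sin (Real.log s)).comp s hl
  have := ((hasDerivAt_id s).div_const (Real.sqrt 2)).mul hc
  refine this.congr_deriv ?_
  have hs0 : s ≠ 0 := hs.ne'
  field_simp
  simp only [Function.comp_apply, id]
  ring

lemma hasDerivAt_a1 (s : ℝ) (hs : 0 < s) :
    HasDerivAt (fun t => (Real.cos (Real.log t) - Real.sin (Real.log t)) / Real.sqrt 2)
      (-((Real.sin (Real.log s) + Real.cos (Real.log s)) / (s * Real.sqrt 2))) s := by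
  have h2 : Real.sqrt 2 ≠ 0 := by positivity
  have hl := Real.hasDerivAt_log hs.ne'
  have hc := (Real.hasDerivAt_cos (Real.log s)).comp s hl
  have hsn := (Real.hasDerivAt_sin (Real.log s)).comp s hl
  have := (hc.sub hsn).div_const (Real.sqrt 2)
  refine this.congr_deriv ?_
  have hs0 : s ≠ 0 := hs.ne'
  field_simp
  ring

lemma hasDerivAt_b1 (s : ℝ) (hs : 0 < s) :
    HasDerivAt (fun t => (Real.sin (Real.log t) + Real.cos (Real.log t)) / Real.sqrt 2)
      ((Real.cos (Real.log s) - Real.sin (Real.log s)) / (s * Real.sqrt 2)) s := by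
  have h2 : Real.sqrt 2 ≠ 0 := by positivity
  have hl := Real.hasDerivAt_log hs.ne'
  have hc := (Real.hasDerivAt_cos (Real.log s)).comp s hl
  have hsn := (Real.hasDerivAt_sin (Real.log s)).comp s hl
  have := (hsn.add hc).div_const (Real.sqrt 2)
  refine this.congr_deriv ?_
  have hs0 : s ≠ 0 := hs.ne'
  field_simp
  ring

/-- Along the logarithmic spiral, the radial unit vector field has constant
tangential component `1/√2` and makes the constant product `-1/√2` with the
unit principal normal. -/
theorem log_spiral_slant_helix (γ : ℝ → EuclideanSpace ℝ (Fin 3))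
    (hγ0 : ∀ s : ℝ, γ s 0 = s / Real.sqrt 2 * Real.cos (Real.log s))
    (hγ1 : ∀ s : ℝ, γ s 1 = 0)
    (hγ2 : ∀ s : ℝ, γ s 2 = s / Real.sqrt 2 * Real.sin (Real.log s)) :
    ∀ s : ℝ, 0 < s →
      (inner ℝ ((‖γ s‖)⁻¹ • γ s) (deriv γ s) : ℝ) = 1 / Real.sqrt 2 ∧
      (inner ℝ ((‖γ s‖)⁻¹ • γ s)
        ((‖deriv (deriv γ) s‖)⁻¹ • deriv (deriv γ) s) : ℝ) = -(1 / Real.sqrt 2) := by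
  have h2 : (0:ℝ) < Real.sqrt 2 := by positivity
  have h2' : Real.sqrt 2 * Real.sqrt 2 = 2 := Real.mul_self_sqrt (by norm_num)
  have hγF : γ = fun t => e3 (t / Real.sqrt 2 * Real.cos (Real.log t)) 0
      (t / Real.sqrt 2 * Real.sin (Real.log t)) := by
    funext t
    ext i
    fin_cases i
    · simpa [e3] using hγ0 t
    · simpa [e3] using hγ1 t
    · simpa [e3] using hγ2 t
  intro s hs
  have hderiv1 : ∀ t, 0 < t → deriv γ t =
      e3 ((Real.cos (Real.log t) - Real.sin (Real.log t)) / Real.sqrt 2) 0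
        ((Real.sin (Real.log t) + Real.cos (Real.log t)) / Real.sqrt 2) := by
    intro t ht
    rw [hγF]
    exact (hasDerivAt_e3 (hasDerivAt_a t ht) (hasDerivAt_const t 0) (hasDerivAt_b t ht)).deriv
  have hev : deriv γ =ᶠ[nhds s] fun t =>
      e3 ((Real.cos (Real.log t) - Real.sin (Real.log t)) / Real.sqrt 2) 0
        ((Real.sin (Real.log t) + Real.cos (Real.log t)) / Real.sqrt 2) := by
    filter_upwards [Ioi_mem_nhds hs] with t ht using hderiv1 t ht
  have hderiv2 : deriv (deriv γ) s =
      e3 (-((Real.sin (Real.log s) + Real.cos (Real.log s)) / (s * Real.sqrt 2))) 0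
        ((Real.cos (Real.log s) - Real.sin (Real.log s)) / (s * Real.sqrt 2)) := by
    rw [hev.deriv_eq]
    exact (hasDerivAt_e3 (hasDerivAt_a1 s hs) (hasDerivAt_const s 0) (hasDerivAt_b1 s hs)).deriv
  have hpy := Real.sin_sq_add_cos_sq (Real.log s)
  have hsq : Real.sqrt 2 ^ 2 = 2 := Real.sq_sqrt (by norm_num)
  have hnγ : ‖γ s‖ = s / Real.sqrt 2 := by
    rw [hγF]
    rw [norm_e3]
    have h : (s / Real.sqrt 2 * Real.cos (Real.log s)) ^ 2 + 0 ^ 2 +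
        (s / Real.sqrt 2 * Real.sin (Real.log s)) ^ 2 = (s / Real.sqrt 2) ^ 2 := by
      linear_combination (s / Real.sqrt 2) ^ 2 * hpy
    rw [h, Real.sqrt_sq (by positivity)]
  have hnγ2 : ‖deriv (deriv γ) s‖ = s⁻¹ := by
    rw [hderiv2, norm_e3]
    have h : (-((Real.sin (Real.log s) + Real.cos (Real.log s)) / (s * Real.sqrt 2))) ^ 2 + 0 ^ 2 +
        ((Real.cos (Real.log s) - Real.sin (Real.log s)) / (s * Real.sqrt 2)) ^ 2 = (s⁻¹) ^ 2 := by
      have hs0 : s ≠ 0 := hs.ne'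
      field_simp
      linear_combination 2 * hpy - hsq
    rw [h, Real.sqrt_sq (by positivity)]
  constructor
  · rw [hnγ, hderiv1 s hs, real_inner_smul_left]
    nth_rewrite 1 [hγF]
    rw [inner_e3]
    have hs0 : s ≠ 0 := hs.ne'
    have h2n : Real.sqrt 2 ≠ 0 := h2.ne'
    field_simp
    linear_combination s * hpy
  · rw [hnγ, hnγ2, hderiv2, real_inner_smul_left, real_inner_smul_right]
    nth_rewrite 1 [hγF]
    rw [inner_e3]
    have hs0 : s ≠ 0 := hs.ne'
    have h2n : Real.sqrt 2 ≠ 0 := h2.ne'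
    field_simp
    linear_combination (-1) * hpy
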